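/- For every n ≥ 1, μ(n) ≤ E[R_n] ≤ (1 + e/n) · μ(n), where e is Euler's number. -/

import Mathlib

open MeasureTheory ProbabilityTheory Filter Topology
open scoped ENNReal NNReal

lemma aux_sq_le (t : ℝ) (ht : 0 ≤ t) : t ^ 2 ≤ Real.exp t - 1 := by
  have h := Real.sum_le_exp_of_nonneg ht 4
  have heq : ∑ i ∈ Finset.range 4, t ^ i / i.factorial
      = 1 + t + t ^ 2 / 2 + t ^ 3 / 6 := by
    simp [Finset.sum_range_succ, Nat.factorial]
    try ring
  rw [heq] at h
  nlinarith [mul_nonneg ht (sq_nonneg (t - 3/2))]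

lemma aux_pow_sub (a b : ℝ) (hb : 0 ≤ b) (hba : b ≤ a) (n : ℕ) :
    a ^ (n + 1) - b ^ (n + 1) ≤ (n + 1 : ℝ) * (a - b) * a ^ n := by
  have ha : 0 ≤ a := hb.trans hba
  induction n with
  | zero => simp
  | succ m ih =>
    have hbm : b ^ (m + 1) ≤ a ^ (m + 1) := pow_le_pow_left₀ hb hba _
    have h2 : a * (a ^ (m + 1) - b ^ (m + 1)) ≤ a * ((m + 1 : ℝ) * (a - b) * a ^ m) :=
      mul_le_mul_of_nonneg_left ih ha
    have h3 : b ^ (m + 1) * (a - b) ≤ a ^ (m + 1) * (a - b) :=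
      mul_le_mul_of_nonneg_right hbm (by linarith)
    have hkey : a ^ (m + 1 + 1) - b ^ (m + 1 + 1)
        = a * (a ^ (m + 1) - b ^ (m + 1)) + b ^ (m + 1) * (a - b) := by ring
    push_cast
    rw [hkey]
    calc a * (a ^ (m + 1) - b ^ (m + 1)) + b ^ (m + 1) * (a - b)
        ≤ a * ((m + 1 : ℝ) * (a - b) * a ^ m) + a ^ (m + 1) * (a - b) := by linarith
      _ = ((m : ℝ) + 1 + 1) * (a - b) * a ^ (m + 1) := by ring

lemma aux_exp_pow (p : ℝ) (n : ℕ) : Real.exp (-p) ^ n = Real.exp (-(n : ℝ) * p) := by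
  rw [← Real.exp_nat_mul]; ring_nf

lemma aux_lower (p : ℝ) (hp1 : p ≤ 1) (n : ℕ) :
    1 - Real.exp (-(n : ℝ) * p) ≤ 1 - (1 - p) ^ n := by
  have h1 : (1 - p) ^ n ≤ Real.exp (-p) ^ n := by
    apply pow_le_pow_left₀ (by linarith) _
    linarith [Real.add_one_le_exp (-p)]
  rw [aux_exp_pow] at h1
  linarith

lemma aux_upper (p : ℝ) (hp0 : 0 ≤ p) (hp1 : p ≤ 1) (n : ℕ) (hn : 1 ≤ n) :
    1 - (1 - p) ^ n ≤ (1 + Real.exp 1 / n) * (1 - Real.exp (-(n : ℝ) * p)) := by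
  obtain ⟨m, rfl⟩ : ∃ m, n = m + 1 := ⟨n - 1, (Nat.succ_pred_eq_of_pos hn).symm⟩
  set a := Real.exp (-p) with ha_def
  set b := 1 - p with hb_def
  have ha0 : 0 < a := Real.exp_pos _
  have hb0 : 0 ≤ b := by simp only [hb_def]; linarith
  have hba : b ≤ a := by
    have := Real.add_one_le_exp (-p); simp only [hb_def, ha_def]; linarith
  -- a - b ≤ p ^ 2
  have hab : a - b ≤ p ^ 2 := by
    have h2 : 1 + p ≤ Real.exp p := by linarith [Real.add_one_le_exp p]
    have h1 : a ≤ 1 / (1 + p) := by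
      have h3 := one_div_le_one_div_of_le (show (0:ℝ) < 1 + p by linarith) h2
      rw [ha_def, Real.exp_neg, inv_eq_one_div]
      exact h3
    have hq : 1 / (1 + p) - (1 - p) = p ^ 2 / (1 + p) := by
      field_simp; ring
    have h4 : p ^ 2 / (1 + p) ≤ p ^ 2 := div_le_self (sq_nonneg p) (by linarith)
    simp only [hb_def]
    linarith
  -- a ^ m ≤ e * a ^ (m+1)
  have ham : a ^ m ≤ Real.exp 1 * a ^ (m + 1) := by
    have : Real.exp 1 * a ^ (m + 1) = (Real.exp 1 * a) * a ^ m := by ring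
    rw [this]
    have h5 : 1 ≤ Real.exp 1 * a := by
      rw [ha_def, ← Real.exp_add]
      have : 0 ≤ 1 + -p := by linarith
      calc (1:ℝ) = Real.exp 0 := (Real.exp_zero).symm
        _ ≤ Real.exp (1 + -p) := Real.exp_le_exp.mpr (by linarith)
    nlinarith [pow_nonneg ha0.le m]
  -- combine
  have hps := aux_pow_sub a b hb0 hba m
  have hsq := aux_sq_le ((m + 1 : ℝ) * p) (by positivity)
  -- (m+1)^2 p^2 ≤ exp((m+1)p) - 1, so (m+1)^2 p^2 * a^(m+1) ≤ 1 - a^(m+1)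
  have hexp_inv : Real.exp ((m + 1 : ℝ) * p) * a ^ (m + 1) = 1 := by
    rw [ha_def, aux_exp_pow, ← Real.exp_add]
    have : (m + 1 : ℝ) * p + -(((m+1:ℕ)) : ℝ) * p = 0 := by push_cast; ring
    rw [this, Real.exp_zero]
  have han1 : (0:ℝ) < a ^ (m + 1) := pow_pos ha0 _
  have hkey : ((m + 1 : ℝ)) ^ 2 * p ^ 2 * a ^ (m + 1) ≤ 1 - a ^ (m + 1) := by
    have := mul_le_mul_of_nonneg_right hsq han1.le
    calc ((m + 1 : ℝ)) ^ 2 * p ^ 2 * a ^ (m + 1)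
        = ((m + 1 : ℝ) * p) ^ 2 * a ^ (m + 1) := by ring
      _ ≤ (Real.exp ((m + 1 : ℝ) * p) - 1) * a ^ (m + 1) := this
      _ = 1 - a ^ (m + 1) := by rw [sub_mul, hexp_inv, one_mul]
  -- a^(m+1) - b^(m+1) ≤ (m+1) p^2 a^m ≤ e (m+1) p^2 a^(m+1) ≤ (e/(m+1)) (1 - a^(m+1))
  have hstep : a ^ (m + 1) - b ^ (m + 1) ≤ Real.exp 1 / (m + 1 : ℝ) * (1 - a ^ (m + 1)) := by
    have hm1 : (0:ℝ) < (m + 1 : ℝ) := by positivity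
    have e0 : (0:ℝ) < Real.exp 1 := Real.exp_pos 1
    have c1 : a ^ (m + 1) - b ^ (m + 1) ≤ (m + 1 : ℝ) * p ^ 2 * a ^ m := by
      have := mul_le_mul_of_nonneg_right
        (mul_le_mul_of_nonneg_left hab (by positivity : (0:ℝ) ≤ (m + 1 : ℝ)))
        (pow_nonneg ha0.le m)
      calc a ^ (m + 1) - b ^ (m + 1) ≤ (m + 1 : ℝ) * (a - b) * a ^ m := hps
        _ ≤ (m + 1 : ℝ) * p ^ 2 * a ^ m := this
    have c2 : (m + 1 : ℝ) * p ^ 2 * a ^ m ≤ Real.exp 1 * ((m + 1 : ℝ) * p ^ 2) * a ^ (m + 1) := by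
      have := mul_le_mul_of_nonneg_left ham
        (by positivity : (0:ℝ) ≤ (m + 1 : ℝ) * p ^ 2)
      calc (m + 1 : ℝ) * p ^ 2 * a ^ m = (m + 1 : ℝ) * p ^ 2 * a ^ m := rfl
        _ ≤ (m + 1 : ℝ) * p ^ 2 * (Real.exp 1 * a ^ (m + 1)) := this
        _ = Real.exp 1 * ((m + 1 : ℝ) * p ^ 2) * a ^ (m + 1) := by ring
    have c3 : Real.exp 1 * ((m + 1 : ℝ) * p ^ 2) * a ^ (m + 1)
        ≤ Real.exp 1 / (m + 1 : ℝ) * (1 - a ^ (m + 1)) := by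
      rw [div_mul_eq_mul_div, le_div_iff₀ hm1]
      calc Real.exp 1 * ((m + 1 : ℝ) * p ^ 2) * a ^ (m + 1) * (m + 1 : ℝ)
          = Real.exp 1 * (((m + 1 : ℝ)) ^ 2 * p ^ 2 * a ^ (m + 1)) := by ring
        _ ≤ Real.exp 1 * (1 - a ^ (m + 1)) := by
            exact mul_le_mul_of_nonneg_left hkey e0.le
    linarith
  have hb_le : b ^ (m + 1) ≤ a ^ (m + 1) := pow_le_pow_left₀ hb0 hba _
  have hfin : (1:ℝ) - b ^ (m + 1) = (1 - a ^ (m + 1)) + (a ^ (m + 1) - b ^ (m + 1)) := by ring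
  have hcast : ((m + 1 : ℕ) : ℝ) = (m + 1 : ℝ) := by push_cast; ring
  have haexp : Real.exp (-((m + 1 : ℕ) : ℝ) * p) = a ^ (m + 1) := by
    rw [ha_def, aux_exp_pow]
  rw [haexp, hfin]
  have ha1' : a ^ (m + 1) ≤ 1 := pow_le_one₀ ha0.le (Real.exp_le_one_iff.mpr (by linarith))
  have : (1 + Real.exp 1 / ((m + 1 : ℕ) : ℝ)) * (1 - a ^ (m + 1))
      = (1 - a ^ (m + 1)) + Real.exp 1 / (m + 1 : ℝ) * (1 - a ^ (m + 1)) := by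
    rw [hcast]; ring
  rw [this]
  linarith

theorem expectation_range_renewal_bounds
    {Ω : Type*} [MeasurableSpace Ω] (P : Measure Ω) [IsProbabilityMeasure P]
    (π : ℕ → ℝ) (hπpos : ∀ i, 0 < π i) (hπmono : ∀ i, π (i + 1) ≤ π i)
    (hπsum : HasSum π 1)
    (ξ : ℕ → Ω → ℕ) (hξmeas : ∀ k, Measurable (ξ k))
    (hξindep : iIndepFun ξ P)
    (hξlaw : ∀ k i, P {ω | ξ k ω = i} = ENNReal.ofReal (π i))
    (R : ℕ → Ω → ℕ)
    (hR : ∀ n ω, R n ω = ((Finset.range n).image fun k => ξ k ω).card)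
    (μ : ℝ → ℝ) (hμ : ∀ t, μ t = ∑' i, (1 - Real.exp (-t * π i)))
    (n : ℕ) (hn : 1 ≤ n) :
    μ n ≤ ∫ ω, (R n ω : ℝ) ∂P ∧
      ∫ ω, (R n ω : ℝ) ∂P ≤ (1 + Real.exp 1 / n) * μ n := by
  classical
  have hπ1 : ∀ i, π i ≤ 1 := fun i => le_hasSum hπsum i (fun j _ => (hπpos j).le)
  have hπs : Summable π := hπsum.summable
  set A : ℕ → Set Ω := fun i => ⋃ k ∈ Finset.range n, ξ k ⁻¹' {i} with hA_def
  have hAmeas : ∀ i, MeasurableSet (A i) := fun i =>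
    MeasurableSet.biUnion (Finset.range n).countable_toSet
      (fun k _ => (hξmeas k) (measurableSet_singleton i))
  have hmemA : ∀ i ω, ω ∈ A i ↔ i ∈ (Finset.range n).image fun k => ξ k ω := by
    intro i ω
    simp only [hA_def, Set.mem_iUnion, Set.mem_preimage, Set.mem_singleton_iff,
      Finset.mem_image, Finset.mem_range, exists_prop]
  -- representation of R n as a tsum of indicators
  have hrep : ∀ ω, ((R n ω : ℝ≥0∞)) = ∑' i, (A i).indicator (1 : Ω → ℝ≥0∞) ω := by
    intro ω
    set S := (Finset.range n).image fun k => ξ k ω with hS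
    rw [hR]
    rw [tsum_eq_sum (s := S)
      (fun i hi => Set.indicator_of_notMem (fun h => hi ((hmemA i ω).mp h)) _)]
    have : ∀ i ∈ S, (A i).indicator (1 : Ω → ℝ≥0∞) ω = 1 := fun i hi =>
      Set.indicator_of_mem ((hmemA i ω).mpr hi) _
    rw [Finset.sum_congr rfl this]
    simp
    convert rfl
  have hFmeas : Measurable fun ω => ∑' i, (A i).indicator (1 : Ω → ℝ≥0∞) ω :=
    Measurable.ennreal_tsum (fun i => measurable_one.indicator (hAmeas i))
  -- measure of A i
  have hPA : ∀ i, P (A i) = ENNReal.ofReal (1 - (1 - π i) ^ n) := by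
    intro i
    have h1 : ∀ k, P (ξ k ⁻¹' ({i}ᶜ)) = ENNReal.ofReal (1 - π i) := by
      intro k
      rw [Set.preimage_compl,
        prob_compl_eq_one_sub ((hξmeas k) (measurableSet_singleton i))]
      have : ξ k ⁻¹' {i} = {ω | ξ k ω = i} := rfl
      rw [this, hξlaw, ENNReal.ofReal_sub 1 (hπpos i).le, ENNReal.ofReal_one]
    have hcompl : (A i)ᶜ = ⋂ k ∈ Finset.range n, ξ k ⁻¹' ({i}ᶜ) := by
      simp [hA_def, Set.compl_iUnion]
    have hI : P (⋂ k ∈ Finset.range n, ξ k ⁻¹' ({i}ᶜ))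
        = ENNReal.ofReal ((1 - π i) ^ n) := by
      rw [hξindep.meas_biInter
        (fun k _ => ⟨{i}ᶜ, (measurableSet_singleton i).compl, rfl⟩)]
      rw [Finset.prod_congr rfl (fun k _ => h1 k), Finset.prod_const,
        Finset.card_range, ← ENNReal.ofReal_pow (by linarith [hπ1 i])]
    have h2 := prob_compl_eq_one_sub (μ := P) (hAmeas i).compl
    rw [compl_compl] at h2
    rw [h2, hcompl, hI, ENNReal.ofReal_sub 1 (pow_nonneg (by linarith [hπ1 i]) n),
      ENNReal.ofReal_one]
  -- lintegral
  have hlint : ∫⁻ ω, (R n ω : ℝ≥0∞) ∂P = ∑' i, ENNReal.ofReal (1 - (1 - π i) ^ n) := by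
    calc ∫⁻ ω, (R n ω : ℝ≥0∞) ∂P
        = ∫⁻ ω, ∑' i, (A i).indicator (1 : Ω → ℝ≥0∞) ω ∂P := lintegral_congr hrep
      _ = ∑' i, ∫⁻ ω, (A i).indicator (1 : Ω → ℝ≥0∞) ω ∂P :=
          lintegral_tsum (fun i => (measurable_one.indicator (hAmeas i)).aemeasurable)
      _ = ∑' i, P (A i) := tsum_congr fun i => lintegral_indicator_one (hAmeas i)
      _ = _ := tsum_congr hPA
  -- pointwise bounds and summability
  have hg0 : ∀ i, 0 ≤ 1 - (1 - π i) ^ n := by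
    intro i
    have := pow_le_one₀ (by linarith [hπ1 i] : (0:ℝ) ≤ 1 - π i)
      (by linarith [hπpos i] : (1:ℝ) - π i ≤ 1) (n := n)
    linarith
  have hgle : ∀ i, 1 - (1 - π i) ^ n ≤ (n : ℝ) * π i := by
    intro i
    have h := one_add_mul_le_pow (a := -π i) (by linarith [hπ1 i]) n
    have : (1 : ℝ) + -π i = 1 - π i := by ring
    rw [this] at h
    linarith
  have hh0 : ∀ i, 0 ≤ 1 - Real.exp (-(n:ℝ) * π i) := by
    intro i
    have : Real.exp (-(n:ℝ) * π i) ≤ 1 := Real.exp_le_one_iff.mpr (by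
      have : (0:ℝ) ≤ (n:ℝ) * π i := mul_nonneg (Nat.cast_nonneg n) (hπpos i).le
      linarith)
    linarith
  have hhle : ∀ i, 1 - Real.exp (-(n:ℝ) * π i) ≤ (n : ℝ) * π i := by
    intro i
    have := Real.add_one_le_exp (-(n:ℝ) * π i)
    linarith
  have hsum_np : Summable (fun i => (n:ℝ) * π i) := hπs.mul_left _
  have hgsum : Summable (fun i => 1 - (1 - π i) ^ n) :=
    Summable.of_nonneg_of_le hg0 hgle hsum_np
  have hhsum : Summable (fun i => 1 - Real.exp (-(n:ℝ) * π i)) :=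
    Summable.of_nonneg_of_le hh0 hhle hsum_np
  -- the expectation
  have hE : ∫ ω, (R n ω : ℝ) ∂P = ∑' i, (1 - (1 - π i) ^ n) := by
    have hmeasR : Measurable fun ω => ((R n ω : ℝ≥0∞)) := by
      have : (fun ω => ((R n ω : ℝ≥0∞)))
          = fun ω => ∑' i, (A i).indicator (1 : Ω → ℝ≥0∞) ω := funext hrep
      rw [this]; exact hFmeas
    have haemeas : AEMeasurable (fun ω => (R n ω : ℝ)) P := by
      have : (fun ω => (R n ω : ℝ)) = fun ω => ((R n ω : ℝ≥0∞)).toReal := by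
        funext ω; simp
      rw [this]; exact hmeasR.ennreal_toReal.aemeasurable
    rw [integral_eq_lintegral_of_nonneg_ae (ae_of_all _ fun ω => by positivity) haemeas.aestronglyMeasurable]
    have hh : ∀ ω, ENNReal.ofReal ((R n ω : ℝ)) = ((R n ω : ℝ≥0∞)) := fun ω => by
      simp [ENNReal.ofReal_natCast]
    rw [lintegral_congr hh, hlint,
      ENNReal.tsum_toReal_eq (fun i => ENNReal.ofReal_ne_top)]
    exact tsum_congr fun i => ENNReal.toReal_ofReal (hg0 i)
  rw [hμ, hE]
  constructor
  · exact Summable.tsum_le_tsum (fun i => aux_lower (π i) (hπ1 i) n) hhsum hgsum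
  · rw [← tsum_mul_left]
    exact Summable.tsum_le_tsum
      (fun i => aux_upper (π i) (hπpos i).le (hπ1 i) n hn) hgsum (hhsum.mul_left _)
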